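/- Let k be a field of characteristic p > 0. Then the map from (RatFunc k) × (RatFunc k) to RatFunc k sending (x, y) to x^p + t·y^p, where t denotes the indeterminate X of RatFunc k, is injective. -/

import Mathlib

lemma intDegree_pow_aux {K : Type*} [Field K] (r : RatFunc K) (hr : r ≠ 0) (n : ℕ) :
    RatFunc.intDegree (r ^ n) = n * RatFunc.intDegree r := by
  induction n with
  | zero => simp [RatFunc.intDegree_one]
  | succ n ih =>
    rw [pow_succ, RatFunc.intDegree_mul (pow_ne_zero _ hr) hr, ih]
    push_cast; ring

theorem frobenius_twist_injective (k : Type*) [Field k] (p : ℕ) [CharP k p]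
    (hp : 0 < p) :
    Function.Injective (fun xy : RatFunc k × RatFunc k =>
      xy.1 ^ p + RatFunc.X * xy.2 ^ p) := by
  haveI : NeZero p := ⟨hp.ne'⟩
  have hprime : p.Prime := (CharP.char_is_prime_of_pos k p).out
  haveI : Fact p.Prime := ⟨hprime⟩
  haveI : CharP (RatFunc k) p :=
    charP_of_injective_algebraMap (algebraMap k (RatFunc k)).injective p
  rintro ⟨x₁, y₁⟩ ⟨x₂, y₂⟩ h
  simp only at h
  have hy : y₁ = y₂ := by
    by_contra hy
    have hsub : (x₁ - x₂) ^ p = RatFunc.X * (y₂ - y₁) ^ p := by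
      rw [sub_pow_char, sub_pow_char, mul_sub]
      linear_combination h
    have hyne : y₂ - y₁ ≠ 0 := sub_ne_zero.mpr (Ne.symm hy)
    have hX : RatFunc.X = ((x₁ - x₂) / (y₂ - y₁)) ^ p := by
      rw [div_pow, eq_div_iff (pow_ne_zero _ hyne)]
      exact hsub.symm
    have hne : (x₁ - x₂) / (y₂ - y₁) ≠ 0 := by
      intro h0
      rw [h0, zero_pow hprime.ne_zero] at hX
      exact RatFunc.X_ne_zero hX
    have := congrArg RatFunc.intDegree hX
    rw [RatFunc.intDegree_X, intDegree_pow_aux _ hne] at this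
    have hdvd : (p : ℤ) ∣ 1 := ⟨_, this⟩
    have hle := Int.le_of_dvd one_pos hdvd
    have : (2 : ℤ) ≤ p := by exact_mod_cast hprime.two_le
    omega
  have hx : x₁ ^ p = x₂ ^ p := by
    rw [hy] at h; linear_combination h
  have : x₁ = x₂ := by
    have := frobenius_inj (RatFunc k) p
    exact this (by simpa [frobenius_def] using hx)
  exact Prod.ext this hy
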